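/- Let D be an integrable real-valued random variable with cumulative distribution function F(x) = P(D ≤ x), and suppose c_o = v + c_h > 0 and c_u = p − v + c_s > 0. Let τ = c_u/(c_o + c_u). Then any τ-quantile of D, i.e. any real number x* such that P(D < x*) ≤ τ and P(D ≤ x*) ≥ τ, maximizes the expected profit: E[π(x*,D)] ≥ E[π(x,D)] for all x ∈ ℝ. -/

import Mathlib

open MeasureTheory

/-- Realized newsvendor profit: selling price `p`, purchase cost `v`,
holding cost `ch`, shortage cost `cs`, order quantity `x`, demand `d`. -/
noncomputable def nvProfit (p v ch cs x d : ℝ) : ℝ :=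
  if d ≤ x then p * d - v * x - ch * (x - d) else p * x - v * x - cs * (d - x)

lemma nvProfit_eq (p v ch cs x d : ℝ) :
    nvProfit p v ch cs x d =
      (p - v) * d - ((v + ch) * max (x - d) 0 + (p - v + cs) * max (d - x) 0) := by
  unfold nvProfit
  split_ifs with h
  · rw [max_eq_left (by linarith), max_eq_right (by linarith)]; ring
  · rw [max_eq_right (by linarith), max_eq_left (by linarith)]; ring

/-- Generic step: if pointwise `h xstar + b ≤ h x` with `b` an affine indicator
function of nonnegative integral, then `∫ h xstar ≤ ∫ h x`. -/
lemma aux_step {Ω : Type*} [MeasurableSpace Ω]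
    (μ : Measure Ω) [IsProbabilityMeasure μ] (co cu : ℝ)
    (hco : 0 < co) (hcu : 0 < cu)
    (D : Ω → ℝ) (hD : Integrable D μ)
    (s : Set Ω) (hs : MeasurableSet s) (x xstar : ℝ)
    (hpt : ∀ ω, co * max (xstar - D ω) 0 + cu * max (D ω - xstar) 0 +
        (Set.indicator s (fun _ => (x - xstar) * (co + cu)) ω - (x - xstar) * cu)
        ≤ co * max (x - D ω) 0 + cu * max (D ω - x) 0)
    (hb : 0 ≤ (μ s).toReal * ((x - xstar) * (co + cu)) - (x - xstar) * cu) :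
    (∫ ω, (co * max (xstar - D ω) 0 + cu * max (D ω - xstar) 0) ∂μ)
      ≤ ∫ ω, (co * max (x - D ω) 0 + cu * max (D ω - x) 0) ∂μ := by
  have hint : ∀ y : ℝ, Integrable (fun ω => co * max (y - D ω) 0 + cu * max (D ω - y) 0) μ := by
    intro y
    exact (((integrable_const y).sub hD).pos_part.const_mul co).add
      ((hD.sub (integrable_const y)).pos_part.const_mul cu)
  have hintb : Integrable (fun ω =>
      Set.indicator s (fun _ => (x - xstar) * (co + cu)) ω - (x - xstar) * cu) μ :=
    ((integrable_const _).indicator hs).sub (integrable_const _)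
  have h1 : (∫ ω, ((co * max (xstar - D ω) 0 + cu * max (D ω - xstar) 0) +
      (Set.indicator s (fun _ => (x - xstar) * (co + cu)) ω - (x - xstar) * cu)) ∂μ)
      ≤ ∫ ω, (co * max (x - D ω) 0 + cu * max (D ω - x) 0) ∂μ :=
    integral_mono ((hint xstar).add hintb) (hint x) hpt
  rw [integral_add (hint xstar) hintb, integral_sub ((integrable_const _).indicator hs)
    (integrable_const _), integral_indicator_const _ hs, integral_const] at h1
  simp only [Measure.real, measure_univ, ENNReal.toReal_one, smul_eq_mul, one_smul] at h1
  linarith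

theorem quantile_maximizes_expected_nvProfit {Ω : Type*} [MeasurableSpace Ω]
    (μ : Measure Ω) [IsProbabilityMeasure μ] (p v ch cs : ℝ)
    (hco : 0 < v + ch) (hcu : 0 < p - v + cs)
    (D : Ω → ℝ) (hDm : Measurable D) (hD : Integrable D μ)
    (τ : ℝ) (hτ : τ = (p - v + cs) / ((v + ch) + (p - v + cs)))
    (xstar : ℝ)
    (hlow : (μ {ω | D ω < xstar}).toReal ≤ τ)
    (hhigh : τ ≤ (μ {ω | D ω ≤ xstar}).toReal) :
    ∀ x : ℝ,
      (∫ ω, nvProfit p v ch cs x (D ω) ∂μ) ≤ ∫ ω, nvProfit p v ch cs xstar (D ω) ∂μ := by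
  intro x
  set co := v + ch with hco_def
  set cu := p - v + cs with hcu_def
  have hsum : 0 < co + cu := by linarith
  have hτcu : τ * (co + cu) = cu := by
    rw [hτ]; field_simp
  have hint : ∀ y : ℝ, Integrable (fun ω => co * max (y - D ω) 0 + cu * max (D ω - y) 0) μ := by
    intro y
    exact (((integrable_const y).sub hD).pos_part.const_mul co).add
      ((hD.sub (integrable_const y)).pos_part.const_mul cu)
  have hrw : ∀ y : ℝ, (∫ ω, nvProfit p v ch cs y (D ω) ∂μ)
      = (∫ ω, (p - v) * D ω ∂μ)
        - ∫ ω, (co * max (y - D ω) 0 + cu * max (D ω - y) 0) ∂μ := by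
    intro y
    rw [← integral_sub (hD.const_mul (p - v)) (hint y)]
    exact integral_congr_ae (Filter.Eventually.of_forall fun ω => nvProfit_eq p v ch cs y (D ω))
  rw [hrw x, hrw xstar]
  have key : (∫ ω, (co * max (xstar - D ω) 0 + cu * max (D ω - xstar) 0) ∂μ)
      ≤ ∫ ω, (co * max (x - D ω) 0 + cu * max (D ω - x) 0) ∂μ := by
    rcases le_total xstar x with hx | hx
    · -- x ≥ xstar : use s = {D ≤ xstar}
      apply aux_step μ co cu hco hcu D hD {ω | D ω ≤ xstar} (hDm measurableSet_Iic) x xstar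
      · intro ω
        by_cases hω : D ω ≤ xstar
        · simp only [Set.indicator_apply, Set.mem_setOf_eq, if_pos hω]
          rw [max_eq_left (by linarith : (0:ℝ) ≤ xstar - D ω),
            max_eq_right (by linarith : D ω - xstar ≤ 0),
            max_eq_left (by linarith : (0:ℝ) ≤ x - D ω)]
          have : 0 ≤ cu * max (D ω - x) 0 := mul_nonneg hcu.le (le_max_right _ _)
          nlinarith
        · simp only [Set.indicator_apply, Set.mem_setOf_eq, if_neg hω]
          push_neg at hω
          rw [max_eq_right (by linarith : xstar - D ω ≤ 0),
            max_eq_left (by linarith : (0:ℝ) ≤ D ω - xstar)]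
          have h1 : 0 ≤ co * max (x - D ω) 0 := mul_nonneg hco.le (le_max_right _ _)
          have h2 : cu * (D ω - x) ≤ cu * max (D ω - x) 0 :=
            mul_le_mul_of_nonneg_left (le_max_left _ _) hcu.le
          nlinarith
      · have hF : τ * (co + cu) ≤ (μ {ω | D ω ≤ xstar}).toReal * (co + cu) :=
          mul_le_mul_of_nonneg_right hhigh hsum.le
        rw [hτcu] at hF
        nlinarith
    · -- x ≤ xstar : use s = {D < xstar}
      apply aux_step μ co cu hco hcu D hD {ω | D ω < xstar} (hDm measurableSet_Iio) x xstar
      · intro ω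
        by_cases hω : D ω < xstar
        · simp only [Set.indicator_apply, Set.mem_setOf_eq, if_pos hω]
          rw [max_eq_left (by linarith : (0:ℝ) ≤ xstar - D ω),
            max_eq_right (by linarith : D ω - xstar ≤ 0)]
          have h1 : co * (x - D ω) ≤ co * max (x - D ω) 0 :=
            mul_le_mul_of_nonneg_left (le_max_left _ _) hco.le
          have h2 : 0 ≤ cu * max (D ω - x) 0 := mul_nonneg hcu.le (le_max_right _ _)
          nlinarith
        · simp only [Set.indicator_apply, Set.mem_setOf_eq, if_neg hω]
          push_neg at hω
          rw [max_eq_right (by linarith : xstar - D ω ≤ 0),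
            max_eq_left (by linarith : (0:ℝ) ≤ D ω - xstar)]
          have h1 : 0 ≤ co * max (x - D ω) 0 := mul_nonneg hco.le (le_max_right _ _)
          have h2 : cu * (D ω - x) ≤ cu * max (D ω - x) 0 :=
            mul_le_mul_of_nonneg_left (le_max_left _ _) hcu.le
          nlinarith
      · have hF : (μ {ω | D ω < xstar}).toReal * (co + cu) ≤ τ * (co + cu) :=
          mul_le_mul_of_nonneg_right hlow hsum.le
        rw [hτcu] at hF
        nlinarith
  linarith
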